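/- arXiv:1701.02118 — 3 statements merged into one kernel-verified Lean document; each statement's English description precedes it below -/
import Mathlib

section
/- For the incremental order-decomposition of a sequence of labelled symbols: if l < l', then Decomp_{l'}(s) is a prefix of Decomp_l(s). -/
variable {Γ : Type*}

/-- Helper computing the incremental order-decomposition on the reversed sequence
(rightmost element first): select the first element of order `> l`, then continue
with the threshold raised to its order. -/
def decompRev (ordf : Γ → ℕ) : ℕ → List Γ → List Γ
  | _, [] => []
  | l, a :: rest =>
      if l < ordf a then a :: decompRev ordf (ordf a) rest else decompRev ordf l rest

/-- The incremental order-decomposition `Decomp_l(s)` of a finite sequence `s` over `Γ`: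
`Decomp_l ε = ε`; if `s` has no element of order `> l` then `Decomp_l s = ε`; otherwise,
letting `b` be the last element of `s` with `ord b > l`,
`Decomp_l s = Decomp_{ord b}(s_{<b}) · b` where `s_{<b}` is the strict prefix before
that occurrence. The result is listed left-to-right, ending with `b`. -/
def Decomp (ordf : Γ → ℕ) (l : ℕ) (s : List Γ) : List Γ :=
  (decompRev ordf l s.reverse).reverse

lemma decompRev_suffix_of_le (ordf : Γ → ℕ) (t : List Γ) :
    ∀ {l l' : ℕ}, l ≤ l' → decompRev ordf l' t <:+ decompRev ordf l t := by
  induction t with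
  | nil => intro l l' _; simp [decompRev]
  | cons a rest ih =>
    intro l l' h
    by_cases h' : l' < ordf a
    · have hl : l < ordf a := lt_of_le_of_lt h h'
      simp [decompRev, h', hl]
    · by_cases hl : l < ordf a
      · simp only [decompRev, if_pos hl, if_neg h']
        exact (ih (le_of_not_gt h')).trans (List.suffix_cons a _)
      · simp only [decompRev, if_neg hl, if_neg h']
        exact ih h

/-- If `l < l'` then `Decomp_{l'}(s)` is a (sequence-)prefix of `Decomp_l(s)`. -/
theorem Decomp_prefix_of_lt (ordf : Γ → ℕ) (s : List Γ) {l l' : ℕ} (h : l < l') :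
    Decomp ordf l' s <+: Decomp ordf l s := by
  exact (decompRev_suffix_of_le ordf s.reverse h.le).reverse
end

section
/- Let s be a sequence over Γ and a an element with ord(a) > l. If Decomp_l(s) = ⟨a_r, ..., a_1⟩, then Decomp_l(s · a) = ⟨a⟩ if ord(a) ≥ ord(a_r) (or r = 0); otherwise Decomp_l(s · a) = ⟨a_r, ..., a_i, a⟩ where i is the least index in {1,...,r} with ord(a) < ord(a_i). -/
variable {Γ : Type*}

lemma decompRev_mem_gt (ordf : Γ → ℕ) :
    ∀ (t : List Γ) (l : ℕ) (c : Γ), c ∈ decompRev ordf l t → l < ordf c := by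
  intro t
  induction t with
  | nil => simp [decompRev]
  | cons a rest ih =>
    intro l c hc
    by_cases hla : l < ordf a
    · simp only [decompRev, if_pos hla, List.mem_cons] at hc
      rcases hc with rfl | hc
      · exact hla
      · exact hla.trans (ih _ _ hc)
    · simp only [decompRev, if_neg hla] at hc
      exact ih _ _ hc

lemma decompRev_dropWhile (ordf : Γ → ℕ) :
    ∀ (t : List Γ) (l m : ℕ), l ≤ m →
      decompRev ordf m t =
        (decompRev ordf l t).dropWhile (fun c => !(decide (m < ordf c))) := by
  intro t
  induction t with
  | nil => simp [decompRev]
  | cons a rest ih =>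
    intro l m hlm
    by_cases hla : l < ordf a
    · by_cases hma : m < ordf a
      · simp [decompRev, hla, hma]
      · simp only [decompRev, if_pos hla, if_neg hma, List.dropWhile_cons]
        simp only [hma, decide_false, Bool.not_false, if_true]
        exact ih (ordf a) m (Nat.le_of_not_lt hma)
    · have hma : ¬ m < ordf a := by omega
      simp only [decompRev, if_neg hla, if_neg hma]
      exact ih l m hlm

lemma decompRev_pairwise (ordf : Γ → ℕ) :
    ∀ (t : List Γ) (l : ℕ), (decompRev ordf l t).Pairwise (fun x y => ordf x < ordf y) := by
  intro t
  induction t with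
  | nil => simp [decompRev]
  | cons a rest ih =>
    intro l
    by_cases hla : l < ordf a
    · simp only [decompRev, if_pos hla]
      exact List.pairwise_cons.mpr
        ⟨fun c hc => decompRev_mem_gt ordf rest (ordf a) c hc, ih _⟩
    · simp only [decompRev, if_neg hla]
      exact ih _

lemma takeWhile_append_all {p : Γ → Bool} :
    ∀ (v u : List Γ), (∀ c ∈ v, p c = true) → (∀ c ∈ u, p c = false) →
      (v ++ u).takeWhile p = v := by
  intro v u hv hu
  induction v with
  | nil =>
    cases u with
    | nil => simp
    | cons d u' => simp [List.takeWhile_cons, hu d (by simp)]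
  | cons c v ih =>
    simp only [List.cons_append, List.takeWhile_cons, hv c (by simp), if_true]
    rw [ih (fun x hx => hv x (by simp [hx]))]

/-- Appending an element `a` with `ord a > l`: if `Decomp_l(s) = ⟨a_r, ..., a_1⟩`
(with `a_r` first/leftmost), then `Decomp_l(s · a) = ⟨a⟩` when `r = 0` or
`ord a ≥ ord a_r`; otherwise `Decomp_l(s · a) = ⟨a_r, ..., a_i, a⟩` where `i` is the
least index in `{1,...,r}` with `ord a < ord a_i` — since the orders in the
decomposition are strictly increasing from right to left, `⟨a_r, ..., a_i⟩` is
exactly the longest prefix of `⟨a_r, ..., a_1⟩` consisting of elements of order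
greater than `ord a`. -/
theorem Decomp_append_high (ordf : Γ → ℕ) (s : List Γ) (l : ℕ) (a : Γ) (h : l < ordf a) :
    ((Decomp ordf l s = [] ∨
        ∀ b, (Decomp ordf l s).head? = some b → ordf b ≤ ordf a) →
      Decomp ordf l (s ++ [a]) = [a]) ∧
    (∀ b, (Decomp ordf l s).head? = some b → ordf a < ordf b →
      Decomp ordf l (s ++ [a]) =
        (Decomp ordf l s).takeWhile (fun c => ordf a < ordf c) ++ [a]) := by
  set r := decompRev ordf l s.reverse with hr
  have hD : Decomp ordf l s = r.reverse := rfl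
  have key : Decomp ordf l (s ++ [a]) =
      (decompRev ordf (ordf a) s.reverse).reverse ++ [a] := by
    simp [Decomp, decompRev, h]
  have hA : decompRev ordf (ordf a) s.reverse =
      r.dropWhile (fun c => !(decide (ordf a < ordf c))) :=
    decompRev_dropWhile ordf s.reverse l (ordf a) (Nat.le_of_lt h)
  have hpw : r.Pairwise (fun x y => ordf x < ordf y) := decompRev_pairwise ordf _ l
  constructor
  · intro hyp
    have hall : ∀ c ∈ r, ordf c ≤ ordf a := by
      rcases hyp with h0 | hb
      · intro c hc
        rw [hD, List.reverse_eq_nil_iff] at h0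
        simp [h0] at hc
      · cases hrev : r.reverse with
        | nil =>
          intro c hc
          rw [List.reverse_eq_nil_iff] at hrev
          simp [hrev] at hc
        | cons b0 tl =>
          have hb0 : ordf b0 ≤ ordf a := hb b0 (by rw [hD, hrev]; rfl)
          have hpw' : (b0 :: tl).Pairwise (fun x y => ordf y < ordf x) := by
            rw [← hrev, List.pairwise_reverse]
            exact hpw
          intro c hc
          have : c ∈ b0 :: tl := by rw [← hrev]; exact List.mem_reverse.mpr hc
          rcases List.mem_cons.mp this with rfl | hc'
          · exact hb0
          · exact le_of_lt (lt_of_lt_of_le ((List.pairwise_cons.mp hpw').1 c hc') hb0)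
    have : decompRev ordf (ordf a) s.reverse = [] := by
      rw [hA, List.dropWhile_eq_nil_iff]
      intro c hc
      simp [Nat.not_lt.mpr (hall c hc)]
    rw [key, this, List.reverse_nil, List.nil_append]
  · intro b hb hab
    rw [key, hA, hD]
    congr 1
    have hsplit : r.reverse =
        (r.dropWhile (fun c => !(decide (ordf a < ordf c)))).reverse ++
        (r.takeWhile (fun c => !(decide (ordf a < ordf c)))).reverse := by
      rw [← List.reverse_append, List.takeWhile_append_dropWhile]
    rw [hsplit]
    rw [takeWhile_append_all]
    · intro c hc
      rw [List.mem_reverse, ← hA] at hc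
      simp [decompRev_mem_gt ordf s.reverse (ordf a) c hc]
    · intro c hc
      rw [List.mem_reverse] at hc
      have := List.mem_takeWhile_imp hc
      simpa using this
end

section
/- Monotone safety in the order parameter: if a higher-order stack s with links is l-safe and l ≤ k ≤ n, then s is k-safe. -/
/-- An annotated symbol: a stack symbol together with its link `(j, h)`
(link order `j`, link height `h`). -/
abbrev Ann (Γ : Type) := Γ × ℕ × ℕ

/-- Higher-order stacks with links: an order-0 stack is an annotated symbol, and an
order-(m+1) stack is a (finite) sequence of order-m stacks, the top at the end.
An order-1 stack is thus a sequence of annotated symbols. -/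
def Stk (Γ : Type) : ℕ → Type
  | 0 => Ann Γ
  | m + 1 => List (Stk Γ m)

variable {Γ : Type}

/-- Apply `f` to the last (top) element of a list, if any. -/
def modLast {α : Type} (f : α → α) : List α → List α
  | [] => []
  | [a] => [f a]
  | a :: b :: r => a :: modLast f (b :: r)

/-- The top order-1 stack of a higher-order stack. -/
def top1 : ∀ {m : ℕ}, Stk Γ (m + 1) → Stk Γ 1
  | 0, s => s
  | m + 1, s => top1 (List.getLastD s ([] : Stk Γ (m + 1)))

/-- `pref1 i s`: the prefix of `s` at the `i`-th symbol (0-based) of its top order-1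
stack, i.e. `s` with everything above that occurrence removed. -/
def pref1 : ∀ {m : ℕ}, ℕ → Stk Γ (m + 1) → Stk Γ (m + 1)
  | 0, i, s => List.take (i + 1) s
  | _ + 1, i, s => modLast (pref1 i) s

/-- `popj j s`: the operation `pop_j`, removing the top order-(j-1) stack
(for `1 ≤ j ≤` order of `s`; identity-like otherwise). -/
def popj : ∀ {m : ℕ}, ℕ → Stk Γ (m + 1) → Stk Γ (m + 1)
  | 0, _, s => List.dropLast s
  | m + 1, j, s => if j = m + 2 then List.dropLast s else modLast (popj j) s

/-- `collapse s = pop_j^h s` where `(j, h)` is the link of the top symbol of `s`. -/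
def collapse {m : ℕ} (s : Stk Γ (m + 1)) : Stk Γ (m + 1) :=
  match List.getLast? (top1 s) with
  | some (_, j, h) => (popj j)^[h] s
  | none => s

/-- `push1 x s`: push the annotated symbol `x` onto the top order-1 stack of `s`. -/
def push1 : ∀ {m : ℕ}, Ann Γ → Stk Γ (m + 1) → Stk Γ (m + 1)
  | 0, x, s => List.append s [x]
  | _ + 1, x, s => modLast (push1 x) s

/-- The link-renaming operation `(·)^⟨j⟩`: increment the height of every link of
order `j`, leaving other links unchanged. -/
def renameS (j : ℕ) : ∀ {m : ℕ}, Stk Γ m → Stk Γ m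
  | 0, x => if x.2.1 = j then (x.1, j, x.2.2 + 1) else x
  | _ + 1, s => List.map (renameS j) s

/-- `pushj j s`: the operation `push_j`, duplicating the top order-(j-1) stack and
applying `(·)^⟨j⟩` to the duplicated copy (for `2 ≤ j ≤` order of `s`). -/
def pushj : ∀ {m : ℕ}, ℕ → Stk Γ (m + 1) → Stk Γ (m + 1)
  | 0, _, s => s
  | m + 1, j, s =>
      if j = m + 2 then List.append s (((List.getLast? s).map (renameS j)).toList)
      else modLast (pushj j) s

/-- Helper for the incremental order-decomposition, working on the reversed,
position-annotated top order-1 stack: select the first lambda symbol of order `> l`,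
then continue with the threshold raised to its order. -/
def decompRevD (ordf : Γ → ℕ) (isLam : Γ → Bool) :
    ℕ → List (ℕ × Ann Γ) → List (ℕ × Ann Γ)
  | _, [] => []
  | l, p :: rest =>
      if isLam p.2.1 = true ∧ l < ordf p.2.1 then
        p :: decompRevD ordf isLam (ordf p.2.1) rest
      else decompRevD ordf isLam l rest

/-- The incremental order-decomposition `Decomp_l` of an order-1 stack, with each
selected symbol paired with its position: the last lambda symbol of order `> l`,
preceded by the decomposition of the strict prefix with respect to that order.
The result is listed left-to-right (the symbol of largest order first). -/
def DecompD (ordf : Γ → ℕ) (isLam : Γ → Bool) (l : ℕ) (t : Stk Γ 1) :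
    List (ℕ × Ann Γ) :=
  (decompRevD ordf isLam l (List.map Prod.swap (List.zipIdx (t : List (Ann Γ)))).reverse).reverse

/-- `l`-safety of a higher-order stack `s` (of order `m+1`), for the CPDA order `n`:
(1) every symbol in `Decomp_l` of the top order-1 stack of `s` has link height 1, and
(2) whenever `n - ord a_q + 1 ≤` order of `s` (so that the link of `a_q` is not
dangling), collapsing the prefix of `s` at `a_q` yields an `l`-safe stack if `a_q` is
the last element of the decomposition, and an `ord a_{q-1}`-safe stack if `a_{q-1}`
is its right neighbour in the decomposition. A stack is safe if it is 0-safe. -/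
inductive LSafe (n : ℕ) (ordf : Γ → ℕ) (isLam : Γ → Bool) :
    ℕ → ∀ {m : ℕ}, Stk Γ (m + 1) → Prop
  | intro (l : ℕ) {m : ℕ} (s : Stk Γ (m + 1))
      (hheights : ∀ p ∈ DecompD ordf isLam l (top1 s), p.2.2.2 = 1)
      (hlast : ∀ p, (DecompD ordf isLam l (top1 s)).getLast? = some p →
          n - ordf p.2.1 + 1 ≤ m + 1 →
          LSafe n ordf isLam l (collapse (pref1 p.1 s)))
      (hadj : ∀ i p p', (DecompD ordf isLam l (top1 s))[i]? = some p →
          (DecompD ordf isLam l (top1 s))[i + 1]? = some p' →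
          n - ordf p.2.1 + 1 ≤ m + 1 →
          LSafe n ordf isLam (ordf p'.2.1) (collapse (pref1 p.1 s))) :
      LSafe n ordf isLam l s

lemma decompRevD_dropWhile (ordf : Γ → ℕ) (isLam : Γ → Bool)
    (L : List (ℕ × Ann Γ)) : ∀ l k : ℕ, l ≤ k →
    decompRevD ordf isLam k L =
      (decompRevD ordf isLam l L).dropWhile (fun p => ordf p.2.1 ≤ k) := by
  induction L with
  | nil => intro l k h; simp [decompRevD]
  | cons p rest ih =>
    intro l k h
    by_cases hlam : isLam p.2.1 = true
    · by_cases hk : k < ordf p.2.1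
      · have hl : l < ordf p.2.1 := lt_of_le_of_lt h hk
        rw [decompRevD, decompRevD, if_pos ⟨hlam, hk⟩, if_pos ⟨hlam, hl⟩,
          List.dropWhile_cons]
        simp [Nat.not_le.mpr hk]
      · push_neg at hk
        by_cases hl : l < ordf p.2.1
        · rw [decompRevD, decompRevD, if_neg (fun h' => absurd h'.2 (Nat.not_lt.mpr hk)),
            if_pos ⟨hlam, hl⟩, List.dropWhile_cons]
          simp only [hk, decide_true, if_pos]
          exact ih _ _ hk
        · push_neg at hl
          rw [decompRevD, decompRevD, if_neg (by omega), if_neg (by omega)]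
          exact ih _ _ h
    · rw [decompRevD, decompRevD, if_neg (by simp [hlam]), if_neg (by simp [hlam])]
      exact ih _ _ h

lemma DecompD_prefix (ordf : Γ → ℕ) (isLam : Γ → Bool) (t : Stk Γ 1)
    {l k : ℕ} (h : l ≤ k) :
    ∃ c, DecompD ordf isLam l t = DecompD ordf isLam k t ++ c ∧
      ∀ p ∈ c, ordf p.2.1 ≤ k := by
  refine ⟨(List.takeWhile (fun p => ordf p.2.1 ≤ k)
    (decompRevD ordf isLam l (List.map Prod.swap (List.zipIdx (t : List (Ann Γ)))).reverse)).reverse, ?_, ?_⟩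
  · unfold DecompD
    rw [decompRevD_dropWhile ordf isLam (List.map Prod.swap (List.zipIdx (t : List (Ann Γ)))).reverse l k h, ← List.reverse_append,
      List.takeWhile_append_dropWhile]
  · intro p hp
    rw [List.mem_reverse] at hp
    simpa using List.mem_takeWhile_imp hp

/-- Monotone safety in the order parameter: if a higher-order stack `s` with links is
`l`-safe and `l ≤ k ≤ n`, then `s` is `k`-safe. -/
theorem LSafe.mono (n : ℕ) (ordf : Γ → ℕ) (isLam : Γ → Bool) {m : ℕ}
    (s : Stk Γ (m + 1)) {l k : ℕ} (hsafe : LSafe n ordf isLam l s)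
    (hlk : l ≤ k) (hkn : k ≤ n) : LSafe n ordf isLam k s := by
  induction hsafe generalizing k with
  | intro l s hheights hlast hadj ih_last ih_adj =>
    rename_i m
    obtain ⟨c, hD, hc⟩ := DecompD_prefix ordf isLam (top1 s) hlk
    set Dk := DecompD ordf isLam k (top1 s) with hDk
    refine LSafe.intro k s ?_ ?_ ?_
    · intro p hp
      exact hheights p (by rw [hD]; exact List.mem_append_left c hp)
    · intro p hp hcond
      have hne : Dk ≠ [] := by
        intro h0; rw [hDk] at h0; rw [h0] at hp; simp at hp
      have hlen : 0 < Dk.length := List.length_pos_iff.mpr hne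
      have hi : Dk[Dk.length - 1]? = some p := by
        rwa [← List.getLast?_eq_getElem?]
      cases c with
      | nil =>
        have hD' : DecompD ordf isLam l (top1 s) = Dk := by simpa using hD
        exact ih_last p (by rw [hD']; exact hp) hcond hlk hkn
      | cons p' c' =>
        have h1 : (DecompD ordf isLam l (top1 s))[Dk.length - 1]? = some p := by
          rw [hD, List.getElem?_append_left (by omega)]; exact hi
        have h2 : (DecompD ordf isLam l (top1 s))[(Dk.length - 1) + 1]? = some p' := by
          rw [hD]
          have : Dk.length - 1 + 1 = Dk.length := by omega
          rw [this, List.getElem?_append_right (le_refl _)]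
          simp
        exact ih_adj _ p p' h1 h2 hcond (hc p' List.mem_cons_self) hkn
    · intro i p p' hp hp' hcond
      have hip : i < Dk.length := (List.getElem?_eq_some_iff.mp hp).1
      have hip' : i + 1 < Dk.length := (List.getElem?_eq_some_iff.mp hp').1
      exact hadj i p p'
        (by rw [hD, List.getElem?_append_left hip]; exact hp)
        (by rw [hD, List.getElem?_append_left hip']; exact hp') hcond
end
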